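/- A row contraction T : H^d → H satisfying H = span closure of { (I - Tz*)^{-1} D_{T*} h : z ∈ 𝔹^d, h ∈ H } is completely non-coisometric: there is no nonzero closed subspace H' ⊆ H, co-invariant for each T_k, on which T* acts isometrically. -/

import Mathlib

open ContinuousLinearMap

set_option synthInstance.maxHeartbeats 1000000
set_option maxHeartbeats 1000000

noncomputable section

instance piLpComplete {d : ℕ} {H : Type*} [NormedAddCommGroup H]
    [InnerProductSpace ℂ H] [CompleteSpace H] :
    CompleteSpace (PiLp 2 fun _ : Fin d => H) :=
  inferInstance

/-- The row operator `z : H^d → H`, `(h₁,...,h_d) ↦ Σ zⱼ hⱼ`, for a scalar row `z ∈ ℂ^d`. -/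
def rowOp {d : ℕ} {H : Type*} [NormedAddCommGroup H] [InnerProductSpace ℂ H]
    (z : EuclideanSpace ℂ (Fin d)) : PiLp 2 (fun _ : Fin d => H) →L[ℂ] H :=
  ∑ j, z j • ((ContinuousLinearMap.proj j : (∀ _ : Fin d, H) →L[ℂ] H).comp
    (PiLp.continuousLinearEquiv 2 ℂ (fun _ : Fin d => H)).toContinuousLinearMap)

/-- The column operator `z* : H → H^d`, `h ↦ (z̄₁ h, ..., z̄_d h)`; the adjoint of `rowOp z`. -/
def colOp {d : ℕ} {H : Type*} [NormedAddCommGroup H] [InnerProductSpace ℂ H]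
    (z : EuclideanSpace ℂ (Fin d)) : H →L[ℂ] PiLp 2 (fun _ : Fin d => H) :=
  ((PiLp.continuousLinearEquiv 2 ℂ (fun _ : Fin d => H)).symm.toContinuousLinearMap).comp
    (ContinuousLinearMap.pi fun j => (starRingEnd ℂ (z j)) • ContinuousLinearMap.id ℂ H)

/-- Ampliation `A ⊗ I_d` of an operator `A : H → J` acting componentwise on columns. -/
def liftD {d : ℕ} {H J : Type*} [NormedAddCommGroup H] [InnerProductSpace ℂ H]
    [NormedAddCommGroup J] [InnerProductSpace ℂ J] (A : H →L[ℂ] J) :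
    PiLp 2 (fun _ : Fin d => H) →L[ℂ] PiLp 2 (fun _ : Fin d => J) :=
  ((PiLp.continuousLinearEquiv 2 ℂ (fun _ : Fin d => J)).symm.toContinuousLinearMap).comp <|
    (ContinuousLinearMap.pi fun j =>
      A.comp ((ContinuousLinearMap.proj j : (∀ _ : Fin d, H) →L[ℂ] H))).comp
    (PiLp.continuousLinearEquiv 2 ℂ (fun _ : Fin d => H)).toContinuousLinearMap

lemma colOp_apply {d : ℕ} {H : Type*} [NormedAddCommGroup H] [InnerProductSpace ℂ H]
    (z : EuclideanSpace ℂ (Fin d)) (h : H) (j : Fin d) :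
    colOp z h j = (starRingEnd ℂ (z j)) • h := rfl

lemma rowOp_apply {d : ℕ} {H : Type*} [NormedAddCommGroup H] [InnerProductSpace ℂ H]
    (z : EuclideanSpace ℂ (Fin d)) (x : PiLp 2 (fun _ : Fin d => H)) :
    rowOp z x = ∑ j, z j • x j := by
  simp [rowOp, ContinuousLinearMap.sum_apply]

lemma norm_colOp_apply_le {d : ℕ} {H : Type*} [NormedAddCommGroup H] [InnerProductSpace ℂ H]
    (z : EuclideanSpace ℂ (Fin d)) (h : H) : ‖colOp z h‖ ≤ ‖z‖ * ‖h‖ := by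
  have h1 : ‖colOp z h‖ ^ 2 = (‖z‖ * ‖h‖) ^ 2 := by
    rw [PiLp.norm_sq_eq_of_L2]
    simp only [colOp_apply, norm_smul, RCLike.norm_conj]
    rw [mul_pow, EuclideanSpace.norm_eq z, Real.sq_sqrt (by positivity), Finset.sum_mul]
    congr 1; ext j; ring
  nlinarith [h1, norm_nonneg (colOp z h), mul_nonneg (norm_nonneg z) (norm_nonneg h)]

lemma adjoint_colOp {d : ℕ} {H : Type*} [NormedAddCommGroup H] [InnerProductSpace ℂ H]
    [CompleteSpace H] (z : EuclideanSpace ℂ (Fin d)) :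
    adjoint (colOp z) = rowOp (H := H) z := by
  symm
  rw [ContinuousLinearMap.eq_adjoint_iff]
  intro x y
  rw [rowOp_apply, sum_inner, PiLp.inner_apply]
  congr 1; ext j
  rw [colOp_apply, inner_smul_left, inner_smul_right]

/-- Membership in a closed invariant subspace is preserved by `(1-B)⁻¹` when `‖B‖ < 1`. -/
lemma inverse_one_sub_mem {H : Type*} [NormedAddCommGroup H] [InnerProductSpace ℂ H]
    [CompleteSpace H] (B : H →L[ℂ] H) (hB : ‖B‖ < 1) (H' : Submodule ℂ H)
    (hcl : IsClosed (H' : Set H)) (hinv : ∀ h ∈ H', B h ∈ H') {h : H} (hh : h ∈ H') :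
    (Ring.inverse (1 - B) : H →L[ℂ] H) h ∈ H' := by
  have hsum : HasSum (fun i : ℕ => B ^ i) (Ring.inverse (1 - B)) :=
    hasSum_geom_series_inverse B hB
  have hsum2 : HasSum (fun i : ℕ => (B ^ i) h) ((Ring.inverse (1 - B) : H →L[ℂ] H) h) := by
    have := hsum.mapL (ContinuousLinearMap.apply ℂ H h)
    simpa using this
  have hmem : ∀ i : ℕ, (B ^ i) h ∈ H' := by
    intro i
    induction i with
    | zero => simpa using hh
    | succ n ih =>
      have : (B ^ (n + 1)) h = B ((B ^ n) h) := by
        rw [pow_succ']; rfl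
      rw [this]; exact hinv _ ih
  refine hcl.mem_of_tendsto hsum2.tendsto_sum_nat ?_
  filter_upwards with n
  exact Submodule.sum_mem H' fun i _ => hmem i

/-- A row contraction `T : H^d → H` satisfying the CCNC spanning condition
`H = ⋁_{z ∈ 𝔹^d} (1 - Tz*)⁻¹ ran D_{T*}` is completely non-coisometric: there is no nonzero
closed subspace of `H`, co-invariant for the components of `T`, on which `T*` acts
isometrically. -/
theorem stmt_6 {d : ℕ} {H : Type*} [NormedAddCommGroup H] [InnerProductSpace ℂ H]
    [CompleteSpace H]
    (T : PiLp 2 (fun _ : Fin d => H) →L[ℂ] H) (hT : ‖T‖ ≤ 1)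
    (D' : H →L[ℂ] H) (hD' : D'.IsPositive)
    (hD'2 : D' ∘L D' = 1 - T ∘L (adjoint T))
    (hspan : (⨆ z : {z : EuclideanSpace ℂ (Fin d) // ‖z‖ < 1},
        Submodule.map ((Ring.inverse (1 - T ∘L colOp z.1) : H →L[ℂ] H) : H →ₗ[ℂ] H)
          (LinearMap.range (D' : H →ₗ[ℂ] H))).topologicalClosure = ⊤) :
    ∀ H' : Submodule ℂ H, IsClosed (H' : Set H) →
      (∀ h ∈ H', ∀ k : Fin d, ((adjoint T) h) k ∈ H') →
      (∀ h ∈ H', ‖(adjoint T) h‖ = ‖h‖) →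
      H' = ⊥ := by
  intro H' hcl hco hiso
  rw [Submodule.eq_bot_iff]
  intro h hh
  -- Step 1 : D' kills H'
  have hD'self : IsSelfAdjoint D' := hD'.isSelfAdjoint
  have hDzero : ∀ x ∈ H', D' x = 0 := by
    intro x hx
    have h1 : (inner ℂ ((D' ∘L D') x) x : ℂ) = inner ℂ x x - inner ℂ ((adjoint T) x) ((adjoint T) x) := by
      rw [hD'2]
      simp only [ContinuousLinearMap.sub_apply, ContinuousLinearMap.one_apply,
        ContinuousLinearMap.comp_apply, inner_sub_left]
      congr 1
      rw [← ContinuousLinearMap.adjoint_inner_right]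
    have h2 : (inner ℂ ((adjoint T) x) ((adjoint T) x) : ℂ) = inner ℂ x x := by
      rw [inner_self_eq_norm_sq_to_K, inner_self_eq_norm_sq_to_K, hiso x hx]
    have h3 : (inner ℂ (D' x) (D' x) : ℂ) = 0 := by
      have key := ContinuousLinearMap.adjoint_inner_left D' x (D' x)
      rw [hD'self.adjoint_eq] at key
      have : (inner ℂ ((D' ∘L D') x) x : ℂ) = inner ℂ (D' x) (D' x) := by
        rw [ContinuousLinearMap.comp_apply, key]
      rw [← this, h1, h2, sub_self]
    exact inner_self_eq_zero.mp h3
  -- Step 2 : h is orthogonal to every generator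
  have hK : (⨆ z : {z : EuclideanSpace ℂ (Fin d) // ‖z‖ < 1},
        Submodule.map ((Ring.inverse (1 - T ∘L colOp z.1) : H →L[ℂ] H) : H →ₗ[ℂ] H)
          (LinearMap.range (D' : H →ₗ[ℂ] H))) ≤ (ℂ ∙ h)ᗮ := by
    refine iSup_le fun z => ?_
    rintro v ⟨w, ⟨x, rfl⟩, rfl⟩
    rw [Submodule.mem_orthogonal_singleton_iff_inner_left]
    -- ⟪inv (D' x), h⟫ = 0
    set A := T ∘L colOp z.1 with hA
    have hAnorm : ‖A‖ < 1 := by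
      have h1 : ‖A‖ ≤ ‖z.1‖ := by
        refine ContinuousLinearMap.opNorm_le_bound _ (norm_nonneg _) fun y => ?_
        calc ‖A y‖ = ‖T (colOp z.1 y)‖ := by rw [hA]; rfl
          _ ≤ ‖T‖ * ‖colOp z.1 y‖ := T.le_opNorm _
          _ ≤ 1 * (‖z.1‖ * ‖y‖) := by
              exact mul_le_mul hT (norm_colOp_apply_le _ _) (norm_nonneg _) zero_le_one
          _ = ‖z.1‖ * ‖y‖ := by ring
      exact h1.trans_lt z.2
    set B := adjoint A with hB
    have hBnorm : ‖B‖ < 1 := by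
      rw [hB, LinearIsometryEquiv.norm_map ContinuousLinearMap.adjoint A]; exact hAnorm
    have hBinv : ∀ y ∈ H', B y ∈ H' := by
      intro y hy
      have : B y = ∑ j, z.1 j • ((adjoint T) y) j := by
        rw [hB, hA, ContinuousLinearMap.adjoint_comp, ContinuousLinearMap.comp_apply,
          adjoint_colOp, rowOp_apply]
      rw [this]
      exact Submodule.sum_mem H' fun j _ => Submodule.smul_mem H' _ (hco y hy j)
    have hadj : adjoint (Ring.inverse (1 - A) : H →L[ℂ] H) = Ring.inverse (1 - B) := by
      rw [← ContinuousLinearMap.star_eq_adjoint, ← Ring.inverse_star]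
      congr 1
      simp [hB, ← ContinuousLinearMap.star_eq_adjoint]
    have hmem : (Ring.inverse (1 - B) : H →L[ℂ] H) h ∈ H' :=
      inverse_one_sub_mem B hBnorm H' hcl hBinv hh
    calc (inner ℂ ((Ring.inverse (1 - A) : H →L[ℂ] H) (D' x)) h : ℂ)
        = inner ℂ (D' x) ((Ring.inverse (1 - B) : H →L[ℂ] H) h) := by
          rw [← hadj, ContinuousLinearMap.adjoint_inner_right]
      _ = inner ℂ x (D' ((Ring.inverse (1 - B) : H →L[ℂ] H) h)) := by
          conv_lhs => rw [← hD'self.adjoint_eq]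
          rw [ContinuousLinearMap.adjoint_inner_left]
      _ = 0 := by rw [hDzero _ hmem, inner_zero_right]
  have hK2 : (⊤ : Submodule ℂ H) ≤ (ℂ ∙ h)ᗮ := by
    rw [← hspan]
    exact Submodule.topologicalClosure_minimal _ hK (Submodule.isClosed_orthogonal _)
  have : h ∈ (ℂ ∙ h)ᗮ := hK2 Submodule.mem_top
  have := Submodule.mem_orthogonal_singleton_iff_inner_left.mp this
  exact inner_self_eq_zero.mp this


end
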